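/- Elliptic inversion with respect to E: x²/a² + y²/b² = 1 maps an ellipse homothetic to E passing through the origin (minus the origin itself) to a line not through the origin: if (x,y) ≠ (0,0) satisfies x²/a² + y²/b² + Dx + Ey = 0 with (D,E) ≠ (0,0), then (X,Y) = ψ(x,y) satisfies DX + EY + 1 = 0. -/

import Mathlib

/-- Elliptic inversion with respect to the ellipse x^2/a^2 + y^2/b^2 = 1. -/
noncomputable def einv (a b : ℝ) (p : ℝ × ℝ) : ℝ × ℝ :=
  (a ^ 2 * b ^ 2 * p.1 / (b ^ 2 * p.1 ^ 2 + a ^ 2 * p.2 ^ 2),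
   a ^ 2 * b ^ 2 * p.2 / (b ^ 2 * p.1 ^ 2 + a ^ 2 * p.2 ^ 2))

/-- Euclidean norm on ℝ × ℝ. -/
noncomputable def nrm (p : ℝ × ℝ) : ℝ := Real.sqrt (p.1 ^ 2 + p.2 ^ 2)

theorem elliptic_inversion_homothetic_ellipse_through_origin
    (a b D E : ℝ) (ha : 0 < a) (hb : 0 < b) (hDE : (D, E) ≠ (0, 0))
    (p : ℝ × ℝ) (hp : p ≠ 0)
    (hconic : p.1 ^ 2 / a ^ 2 + p.2 ^ 2 / b ^ 2 + D * p.1 + E * p.2 = 0) :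
    D * (einv a b p).1 + E * (einv a b p).2 + 1 = 0 := by
  obtain ⟨x, y⟩ := p
  simp only [einv]
  have hxy : x ≠ 0 ∨ y ≠ 0 := by
    rcases eq_or_ne x 0 with hx | hx
    · right; intro hy; exact hp (by simp [hx, hy, Prod.ext_iff])
    · left; exact hx
  have ha' : a ≠ 0 := ha.ne'
  have hb' : b ≠ 0 := hb.ne'
  have hq : b ^ 2 * x ^ 2 + a ^ 2 * y ^ 2 > 0 := by
    rcases hxy with hx | hy
    · have := mul_pos (pow_pos hb 2) (pow_pos (abs_pos.mpr hx) 2)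
      nlinarith [sq_nonneg (a * y), sq_abs x]
    · have := mul_pos (pow_pos ha 2) (pow_pos (abs_pos.mpr hy) 2)
      nlinarith [sq_nonneg (b * x), sq_abs y]
  have hq' : b ^ 2 * x ^ 2 + a ^ 2 * y ^ 2 ≠ 0 := hq.ne'
  simp only at hconic ⊢
  field_simp at hconic ⊢
  rw [div_add_one (ne_of_gt (by linarith)), div_eq_zero_iff]
  left
  linear_combination hconic
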